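/- Let 1 < p, q < ∞ and suppose the metric two-measure space X = (X,d,ν,μ) supports a maximal (q,p)-Poincaré inequality with constant c. Then there is a constant C > 0 such that (⨍_B |u − u_{B;ν}|^q dν)^{1/q} ≤ C diam(B) (⨍_{2B} g^p dμ)^{1/p} whenever B is a ball in X, u is Lipschitz on X, and g is a p-weak upper gradient of u. -/

import Mathlib

open MeasureTheory Metric Set ENNReal NNReal

noncomputable section

/-- `ν` is doubling with constant `c`. -/
def IsDoubling {X : Type*} [MetricSpace X] [MeasurableSpace X]
    (ν : Measure X) (c : ℝ) : Prop :=
  ∀ (x : X) (r : ℝ), 0 < r → ν (Metric.ball x (2 * r)) ≤ ENNReal.ofReal c * ν (Metric.ball x r)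

/-- `ν` is positive and finite on all balls. -/
def FinitePosOnBalls {X : Type*} [MetricSpace X] [MeasurableSpace X]
    (ν : Measure X) : Prop :=
  ∀ (x : X) (r : ℝ), 0 < r → 0 < ν (Metric.ball x r) ∧ ν (Metric.ball x r) < ⊤

/-- The `(q,p)`-balance condition with constant `C`:
`(diam B'/diam B) (ν B'/ν B)^{1/q} ≤ C^{1/p} (μ B'/μ B)^{1/p}` for all balls
`B`, `B' = B(x',r')` with `x' ∈ B` and `0 < r' ≤ diam B`. -/
def Balance {X : Type*} [MetricSpace X] [MeasurableSpace X]
    (ν μ : Measure X) (q p C : ℝ) : Prop :=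
  ∀ (x : X) (R : ℝ) (x' : X) (r' : ℝ), 0 < R → x' ∈ Metric.ball x R → 0 < r' →
    r' ≤ Metric.diam (Metric.ball x R) →
    (Metric.diam (Metric.ball x' r') / Metric.diam (Metric.ball x R)) *
        ((ν (Metric.ball x' r')).toReal / (ν (Metric.ball x R)).toReal) ^ (1 / q)
      ≤ C ^ (1 / p) *
        ((μ (Metric.ball x' r')).toReal / (μ (Metric.ball x R)).toReal) ^ (1 / p)

/-- The `p`-balance condition with constant `C`:
`(diam B'/diam B)^p (ν B'/ν B) ≤ C (μ B'/μ B)` for all balls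
`B`, `B' = B(x',r')` with `x' ∈ B` and `0 < r' ≤ diam B`. -/
def PBalance {X : Type*} [MetricSpace X] [MeasurableSpace X]
    (ν μ : Measure X) (p C : ℝ) : Prop :=
  ∀ (x : X) (R : ℝ) (x' : X) (r' : ℝ), 0 < R → x' ∈ Metric.ball x R → 0 < r' →
    r' ≤ Metric.diam (Metric.ball x R) →
    (Metric.diam (Metric.ball x' r') / Metric.diam (Metric.ball x R)) ^ p *
        ((ν (Metric.ball x' r')).toReal / (ν (Metric.ball x R)).toReal)
      ≤ C * ((μ (Metric.ball x' r')).toReal / (μ (Metric.ball x R)).toReal)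

/-- A (rectifiable, arc-length parametrized) curve in `X`: a `1`-Lipschitz map
from `[0, len]` to `X` with `len > 0`. -/
structure Curve (X : Type*) [MetricSpace X] where
  len : ℝ
  len_pos : 0 < len
  toFun : ℝ → X
  speed : ∀ s ∈ Set.Icc (0 : ℝ) len, ∀ t ∈ Set.Icc (0 : ℝ) len,
    dist (toFun s) (toFun t) ≤ |s - t|

/-- The curve integral `∫_γ g ds` for an arc-length parametrized curve. -/
def curveLint {X : Type*} [MetricSpace X] (γ : Curve X) (g : X → ℝ≥0∞) : ℝ≥0∞ :=
  ∫⁻ t in Set.Icc (0 : ℝ) γ.len, g (γ.toFun t)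

/-- `g` is a `p`-weak upper gradient of `u` (w.r.t. the measure `μ`): the upper
gradient inequality `|u(γ(0)) - u(γ(ℓ_γ))| ≤ ∫_γ g ds` holds for `p`-almost every
curve, i.e. there is a Borel `ρ ∈ L^p_loc(X; dμ)` such that `∫_γ ρ ds = ∞` for every
exceptional curve. -/
def IsWeakUpperGradient {X : Type*} [MetricSpace X] [MeasurableSpace X]
    (μ : Measure X) (p : ℝ) (u : X → ℝ) (g : X → ℝ≥0∞) : Prop :=
  Measurable g ∧ ∃ ρ : X → ℝ≥0∞, Measurable ρ ∧
    (∀ (x : X) (r : ℝ), 0 < r → ∫⁻ y in Metric.ball x r, ρ y ^ p ∂μ < ⊤) ∧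
    ∀ γ : Curve X, curveLint γ ρ ≠ ⊤ →
      ENNReal.ofReal |u (γ.toFun 0) - u (γ.toFun γ.len)| ≤ curveLint γ g

/-- The normalized `L^q(ν)`-oscillation of `u` on the ball `B(z,r)`:
`((diam B)^{-q} ⨍_B |u - u_{B;ν}|^q dν)^{1/q}`, as an extended real. -/
def ballOsc {X : Type*} [MetricSpace X] [MeasurableSpace X]
    (ν : Measure X) (q : ℝ) (u : X → ℝ) (z : X) (r : ℝ) : ℝ≥0∞ :=
  ((∫⁻ y in Metric.ball z r,
      ENNReal.ofReal |u y - ⨍ w in Metric.ball z r, u w ∂ν| ^ q ∂ν) /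
    (ENNReal.ofReal (Metric.diam (Metric.ball z r) ^ q) * ν (Metric.ball z r))) ^ (1 / q)

/-- The sharp maximal function `M^{ν,q}_𝓑 u` associated with a family `𝓑` of balls
(given by center-radius pairs): the sup of normalized oscillations over balls of the
family containing the point. -/
def sharpMax {X : Type*} [MetricSpace X] [MeasurableSpace X]
    (ν : Measure X) (q : ℝ) (𝓑 : Set (X × ℝ)) (u : X → ℝ) (x : X) : ℝ≥0∞ :=
  ⨆ b ∈ 𝓑, ⨆ _ : x ∈ Metric.ball b.1 b.2, ballOsc ν q u b.1 b.2

/-- if `X` supports a maximal `(q,p)`-Poincaré inequality with constant `c`,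
then there is `C > 0` such that
`(⨍_B |u - u_{B;ν}|^q dν)^{1/q} ≤ C diam(B) (⨍_{2B} g^p dμ)^{1/p}`
for every ball `B`, Lipschitz `u`, and `p`-weak upper gradient `g` of `u`. -/
theorem stmt12 {X : Type*} [MetricSpace X] [MeasurableSpace X] [BorelSpace X]
    (ν μ : Measure X) (q p c : ℝ) (hq : 1 < q) (hp : 1 < p) (hc : 0 < c)
    (hνf : FinitePosOnBalls ν) (hμf : FinitePosOnBalls μ)
    (hνd : ∃ cν > 1, IsDoubling ν cν) (hμd : ∃ cμ > 1, IsDoubling μ cμ)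
    (hmax : ∀ (x₀ : X) (r₀ : ℝ), 0 < r₀ →
      ∀ u : X → ℝ, (∃ L : ℝ≥0, LipschitzWith L u) →
      ∀ g : X → ℝ≥0∞, IsWeakUpperGradient μ p u g →
      ∫⁻ x in Metric.ball x₀ r₀,
          (sharpMax ν q
            {b : X × ℝ | 0 < b.2 ∧ Metric.ball b.1 (2 * b.2) ⊆ Metric.ball x₀ r₀}
            u x) ^ p ∂μ
        ≤ ENNReal.ofReal c * ∫⁻ x in Metric.ball x₀ r₀, g x ^ p ∂μ) :
    ∃ C > 0, ∀ (x : X) (r : ℝ), 0 < r →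
      ∀ u : X → ℝ, (∃ L : ℝ≥0, LipschitzWith L u) →
      ∀ g : X → ℝ≥0∞, IsWeakUpperGradient μ p u g →
      ((ν (Metric.ball x r))⁻¹ *
          ∫⁻ y in Metric.ball x r,
            ENNReal.ofReal |u y - ⨍ z in Metric.ball x r, u z ∂ν| ^ q ∂ν) ^ (1 / q)
        ≤ ENNReal.ofReal (C * Metric.diam (Metric.ball x r)) *
          ((μ (Metric.ball x (2 * r)))⁻¹ *
            ∫⁻ y in Metric.ball x (2 * r), g y ^ p ∂μ) ^ (1 / p) := by
  obtain ⟨cμ, hcμ1, hμdb⟩ := hμd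
  have hcμ0 : (0:ℝ) < cμ := lt_trans one_pos hcμ1
  have hq0 : (0:ℝ) < q := lt_trans one_pos hq
  have hp0 : (0:ℝ) < p := lt_trans one_pos hp
  refine ⟨(c * cμ) ^ (1/p), Real.rpow_pos_of_pos (by positivity) _, ?_⟩
  intro x r hr u hu g hg
  obtain ⟨hν0, hνt⟩ := hνf x r hr
  obtain ⟨hμ0, hμt⟩ := hμf x r hr
  obtain ⟨hμ20, hμ2t⟩ := hμf x (2*r) (by linarith)
  rcases eq_or_lt_of_le (Metric.diam_nonneg (s := Metric.ball x r)) with hD | hD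
  · -- degenerate case: the ball has diameter zero, so it is a singleton
    have hsing : Metric.ball x r = {x} := by
      have hne : EMetric.diam (Metric.ball x r) ≠ ⊤ :=
        Metric.isBounded_ball.ediam_ne_top
      have h0 : EMetric.diam (Metric.ball x r) = 0 := by
        have h := hD.symm
        rw [Metric.diam] at h
        exact ((ENNReal.toReal_eq_zero_iff _).mp h).resolve_right hne
      exact (EMetric.diam_eq_zero_iff.mp h0).eq_singleton_of_mem (Metric.mem_ball_self hr)
    have havg : (⨍ z in Metric.ball x r, u z ∂ν) = u x := by
      rw [hsing, setAverage_eq,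
        setIntegral_congr_fun (measurableSet_singleton x)
          (fun y hy => by rw [Set.mem_singleton_iff.mp hy] :
            Set.EqOn u (fun _ => u x) {x}),
        setIntegral_const, smul_smul, inv_mul_cancel₀, one_smul]
      rw [← hsing]
      exact ENNReal.toReal_ne_zero.mpr ⟨hν0.ne', hνt.ne⟩
    have hosc : (∫⁻ y in Metric.ball x r,
        ENNReal.ofReal |u y - ⨍ z in Metric.ball x r, u z ∂ν| ^ q ∂ν) = 0 := by
      rw [havg, hsing, lintegral_singleton]
      simp [ENNReal.zero_rpow_of_pos hq0]
    rw [hosc, mul_zero, ENNReal.zero_rpow_of_pos (by positivity)]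
    exact zero_le
  · -- main case
    set I := ∫⁻ y in Metric.ball x (2*r), g y ^ p ∂μ with hI
    have hBmem : ((x, r) : X × ℝ) ∈
        {b : X × ℝ | 0 < b.2 ∧ Metric.ball b.1 (2*b.2) ⊆ Metric.ball x (2*r)} :=
      ⟨hr, subset_rfl⟩
    have hpt : ∀ y ∈ Metric.ball x r, ballOsc ν q u x r ≤
        sharpMax ν q {b : X × ℝ | 0 < b.2 ∧ Metric.ball b.1 (2*b.2) ⊆ Metric.ball x (2*r)} u y := by
      intro y hy
      calc ballOsc ν q u x r
          ≤ ⨆ _ : y ∈ Metric.ball x r, ballOsc ν q u x r :=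
            le_iSup (fun _ : y ∈ Metric.ball x r => ballOsc ν q u x r) hy
        _ ≤ _ := le_iSup₂_of_le (x, r) hBmem le_rfl
    have h1 : ballOsc ν q u x r ^ p * μ (Metric.ball x r) ≤ ENNReal.ofReal c * I := by
      have hk := hmax x (2*r) (by linarith) u hu g hg
      refine le_trans ?_ hk
      rw [← setLIntegral_const (Metric.ball x r) (ballOsc ν q u x r ^ p)]
      refine le_trans (lintegral_mono_ae ?_)
        (lintegral_mono_set (Metric.ball_subset_ball (by linarith)))
      exact (ae_restrict_iff' measurableSet_ball).mpr
        (Filter.Eventually.of_forall fun y hy => ENNReal.rpow_le_rpow (hpt y hy) hp0.le)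
    have hcμne : ENNReal.ofReal cμ ≠ 0 := by
      simp [ENNReal.ofReal_eq_zero, not_le, hcμ0]
    have hinv : (μ (Metric.ball x r))⁻¹ ≤ ENNReal.ofReal cμ * (μ (Metric.ball x (2*r)))⁻¹ := by
      have h3 : (ENNReal.ofReal cμ * μ (Metric.ball x r))⁻¹ ≤ (μ (Metric.ball x (2*r)))⁻¹ :=
        ENNReal.inv_le_inv.mpr (hμdb x r hr)
      calc (μ (Metric.ball x r))⁻¹
          = ENNReal.ofReal cμ * ((ENNReal.ofReal cμ)⁻¹ * (μ (Metric.ball x r))⁻¹) := by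
            rw [← mul_assoc, ENNReal.mul_inv_cancel hcμne ENNReal.ofReal_ne_top, one_mul]
        _ = ENNReal.ofReal cμ * (ENNReal.ofReal cμ * μ (Metric.ball x r))⁻¹ := by
            rw [ENNReal.mul_inv (Or.inl hcμne) (Or.inr hμ0.ne')]
        _ ≤ _ := mul_le_mul_right h3 _
    have h2 : ballOsc ν q u x r ^ p ≤
        (ENNReal.ofReal c * ENNReal.ofReal cμ) * ((μ (Metric.ball x (2*r)))⁻¹ * I) := by
      calc ballOsc ν q u x r ^ p
          ≤ (ENNReal.ofReal c * I) / μ (Metric.ball x r) :=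
            (ENNReal.le_div_iff_mul_le (Or.inl hμ0.ne') (Or.inl hμt.ne)).mpr h1
        _ = ENNReal.ofReal c * I * (μ (Metric.ball x r))⁻¹ := by rw [div_eq_mul_inv]
        _ ≤ ENNReal.ofReal c * I * (ENNReal.ofReal cμ * (μ (Metric.ball x (2*r)))⁻¹) :=
            mul_le_mul_right hinv _
        _ = _ := by ring
    have h4 : ballOsc ν q u x r ≤
        (ENNReal.ofReal c * ENNReal.ofReal cμ) ^ (1/p) *
          ((μ (Metric.ball x (2*r)))⁻¹ * I) ^ (1/p) := by
      have h5 := ENNReal.rpow_le_rpow h2 (by positivity : (0:ℝ) ≤ 1/p)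
      rw [ENNReal.mul_rpow_of_nonneg _ _ (by positivity : (0:ℝ) ≤ 1/p),
        one_div, ENNReal.rpow_rpow_inv hp0.ne'] at h5
      rw [one_div]
      exact h5
    have hball : ballOsc ν q u x r =
        ((ν (Metric.ball x r))⁻¹ *
          ∫⁻ y in Metric.ball x r,
            ENNReal.ofReal |u y - ⨍ z in Metric.ball x r, u z ∂ν| ^ q ∂ν) ^ (1/q) /
          ENNReal.ofReal (Metric.diam (Metric.ball x r)) := by
      rw [ballOsc]
      have hEne : ENNReal.ofReal (Metric.diam (Metric.ball x r) ^ q) ≠ 0 := by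
        simp [ENNReal.ofReal_eq_zero, not_le, Real.rpow_pos_of_pos hD]
      have hsplit : (∫⁻ y in Metric.ball x r,
            ENNReal.ofReal |u y - ⨍ z in Metric.ball x r, u z ∂ν| ^ q ∂ν) /
          (ENNReal.ofReal (Metric.diam (Metric.ball x r) ^ q) * ν (Metric.ball x r)) =
          ((ν (Metric.ball x r))⁻¹ *
            ∫⁻ y in Metric.ball x r,
              ENNReal.ofReal |u y - ⨍ z in Metric.ball x r, u z ∂ν| ^ q ∂ν) /
            ENNReal.ofReal (Metric.diam (Metric.ball x r) ^ q) := by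
        rw [div_eq_mul_inv, div_eq_mul_inv,
          ENNReal.mul_inv (Or.inl hEne) (Or.inr hν0.ne')]
        ring
      rw [hsplit, ENNReal.div_rpow_of_nonneg _ _ (by positivity : (0:ℝ) ≤ 1/q)]
      congr 1
      rw [ENNReal.ofReal_rpow_of_pos (Real.rpow_pos_of_pos hD q),
        ← Real.rpow_mul (le_of_lt hD), mul_one_div_cancel hq0.ne', Real.rpow_one]
    have hDne : ENNReal.ofReal (Metric.diam (Metric.ball x r)) ≠ 0 := by
      simp [ENNReal.ofReal_eq_zero, not_le, hD]
    rw [hball] at h4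
    have hfin := (ENNReal.div_le_iff_le_mul (Or.inl hDne) (Or.inl ENNReal.ofReal_ne_top)).mp h4
    have hC : ENNReal.ofReal ((c * cμ) ^ (1/p) * Metric.diam (Metric.ball x r)) =
        (ENNReal.ofReal c * ENNReal.ofReal cμ) ^ (1/p) *
          ENNReal.ofReal (Metric.diam (Metric.ball x r)) := by
      rw [ENNReal.ofReal_mul (by positivity)]
      congr 1
      rw [← ENNReal.ofReal_mul hc.le, ENNReal.ofReal_rpow_of_pos (by positivity)]
    rw [hC]
    calc ((ν (Metric.ball x r))⁻¹ *
          ∫⁻ y in Metric.ball x r,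
            ENNReal.ofReal |u y - ⨍ z in Metric.ball x r, u z ∂ν| ^ q ∂ν) ^ (1/q)
        ≤ (ENNReal.ofReal c * ENNReal.ofReal cμ) ^ (1/p) *
            ((μ (Metric.ball x (2*r)))⁻¹ * I) ^ (1/p) *
            ENNReal.ofReal (Metric.diam (Metric.ball x r)) := hfin
      _ = _ := by ring
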